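/- Let ρ be a probability measure supported on the unit ball in ℝ³, and let I₁, I₂ be its tomographic projections (pushforwards to ℝ² under the coordinate projection) at viewing orientations differing by a rotation R ∈ SO(3) with angle θ between the viewing directions u, v. Then the rotationally-invariant Wasserstein-1 distance satisfies W₁ᴿ(I₁, I₂) ≤ 2 sin(θ/2) ≤ θ. -/

import Mathlib

open MeasureTheory Real InnerProductGeometry
open scoped ENNReal

noncomputable section

abbrev R3 := EuclideanSpace ℝ (Fin 3)
abbrev R2 := EuclideanSpace ℝ (Fin 2)

/-- Coordinate projection ℝ³ → ℝ². -/
def proj : R3 → R2 := fun x => WithLp.toLp 2 (fun i => x i.castSucc : Fin 2 → ℝ)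

/-- Couplings of two measures. -/
def couplings {X : Type*} [MeasurableSpace X] (μ ν : Measure X) : Set (Measure (X × X)) :=
  {γ | γ.map Prod.fst = μ ∧ γ.map Prod.snd = ν}

/-- Wasserstein-1 distance via couplings. -/
def W1 {X : Type*} [MeasurableSpace X] [PseudoEMetricSpace X] (μ ν : Measure X) : ℝ≥0∞ :=
  ⨅ γ ∈ couplings μ ν, ∫⁻ p, edist p.1 p.2 ∂γ

def cross3 (a b : R3) : R3 :=
  (WithLp.equiv 2 (Fin 3 → ℝ)).symm
    ![a 1 * b 2 - a 2 * b 1, a 2 * b 0 - a 0 * b 2, a 0 * b 1 - a 1 * b 0]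

/-- Rodrigues rotation about unit axis `a` by angle `θ`. -/
def rodrigues (a : R3) (θ : ℝ) : R3 → R3 := fun x =>
  (Real.cos θ) • x + (Real.sin θ) • cross3 a x + ((1 - Real.cos θ) * (inner ℝ a x : ℝ)) • a

/-- `R` is a rotation by angle `θ` about some unit axis. -/
def IsAxisRotation (R : R3 → R3) (θ : ℝ) : Prop :=
  ∃ a : R3, ‖a‖ = 1 ∧ R = rodrigues a θ

/-- Planar rotation by angle α. -/
def rot2 (α : ℝ) : R2 → R2 := fun x =>
  (WithLp.equiv 2 (Fin 2 → ℝ)).symm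
    ![Real.cos α * x 0 - Real.sin α * x 1, Real.sin α * x 0 + Real.cos α * x 1]

/-- Rotationally invariant Wasserstein-1 distance on the plane. -/
def W1R (μ ν : Measure R2) : ℝ≥0∞ := ⨅ α : ℝ, W1 μ (ν.map (rot2 α))

def lift3 (w : R2) (z : ℝ) : R3 := (WithLp.equiv 2 (Fin 3 → ℝ)).symm ![w 0, w 1, z]

/-- Tomographic projection at orientation `R`. -/
def tomo (R : R3 ≃ₗᵢ[ℝ] R3) (ρ : R3 → ℝ) : R2 → ℝ := fun w => ∫ z : ℝ, ρ (R.symm (lift3 w z))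

/-- Rotationally invariant L² distance on the unit disk. -/
def L2R (I₁ I₂ : R2 → ℝ) : ℝ :=
  ⨅ α : ℝ, Real.sqrt (∫ w in Metric.closedBall (0 : R2) 1, (I₁ w - I₂ (rot2 α w)) ^ 2)




namespace CryoemAux
open Matrix

lemma adj_formula (A : Matrix (Fin 3) (Fin 3) ℝ) :
    A.adjugate = A * A - (A.trace) • A + (((A.trace)^2 - (A*A).trace)/2) • (1 : Matrix (Fin 3) (Fin 3) ℝ) := by
  ext i j
  fin_cases i <;> fin_cases j <;>
    simp [Matrix.adjugate_fin_three, Matrix.mul_apply, Matrix.trace_fin_three,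
      Fin.sum_univ_three, Matrix.one_apply] <;> ring

lemma adj_eq_transpose (Q : Matrix (Fin 3) (Fin 3) ℝ) (h : Qᵀ * Q = 1) (hdet : Q.det = 1) :
    Q.adjugate = Qᵀ := by
  have h2 : Q * Qᵀ = 1 := mul_eq_one_comm.mp h
  calc Q.adjugate = Q.adjugate * (Q * Qᵀ) := by rw [h2, mul_one]
  _ = (Q.adjugate * Q) * Qᵀ := by rw [mul_assoc]
  _ = Qᵀ := by rw [Matrix.adjugate_mul, hdet, one_smul, one_mul]

lemma ch_rel (Q : Matrix (Fin 3) (Fin 3) ℝ) (h : Qᵀ * Q = 1) (hdet : Q.det = 1) :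
    Qᵀ = Q * Q - Q.trace • Q + Q.trace • (1 : Matrix (Fin 3) (Fin 3) ℝ) := by
  have e1 : Qᵀ = Q * Q - (Q.trace) • Q + (((Q.trace)^2 - (Q*Q).trace)/2) • (1 : Matrix (Fin 3) (Fin 3) ℝ) := by
    rw [← adj_eq_transpose Q h hdet]; exact adj_formula Q
  have ht : Qᵀ.trace = Q.trace := Matrix.trace_transpose Q
  have h3 : Q.trace = (Q*Q).trace - Q.trace^2 + ((Q.trace^2 - (Q*Q).trace)/2) * 3 := by
    calc Q.trace = Qᵀ.trace := ht.symm
    _ = (Q * Q - (Q.trace) • Q + (((Q.trace)^2 - (Q*Q).trace)/2) • (1 : Matrix (Fin 3) (Fin 3) ℝ)).trace := by rw [← e1]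
    _ = (Q*Q).trace - Q.trace * Q.trace + ((Q.trace^2 - (Q*Q).trace)/2) * (1 : Matrix (Fin 3) (Fin 3) ℝ).trace := by
        simp [Matrix.trace_add, Matrix.trace_sub, Matrix.trace_smul, smul_eq_mul]
    _ = (Q*Q).trace - Q.trace^2 + ((Q.trace^2 - (Q*Q).trace)/2) * 3 := by
        norm_num [Matrix.trace_one]; ring
  have hs : ((Q.trace)^2 - (Q*Q).trace)/2 = Q.trace := by linarith
  rw [e1, hs]

lemma diag_le_one {a b c : ℝ} (h : a * a + b * b + c * c = 1) : a ≤ 1 := by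
  nlinarith [sq_nonneg (a - 1), sq_nonneg b, sq_nonneg c]

lemma diag_le_one2 {a b c : ℝ} (h : b * b + a * a + c * c = 1) : a ≤ 1 := by
  nlinarith [sq_nonneg (a - 1), sq_nonneg b, sq_nonneg c]

lemma diag_le_one3 {a b c : ℝ} (h : b * b + c * c + a * a = 1) : a ≤ 1 := by
  nlinarith [sq_nonneg (a - 1), sq_nonneg b, sq_nonneg c]

lemma off_zero {a b c : ℝ} (h : a * a + b * b + c * c = 1) (ha : a = 1) : b = 0 ∧ c = 0 := by
  constructor <;> nlinarith [sq_nonneg b, sq_nonneg c]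

lemma off_zero2 {a b c : ℝ} (h : b * b + a * a + c * c = 1) (ha : a = 1) : b = 0 ∧ c = 0 := by
  constructor <;> nlinarith [sq_nonneg b, sq_nonneg c]

lemma off_zero3 {a b c : ℝ} (h : b * b + c * c + a * a = 1) (ha : a = 1) : b = 0 ∧ c = 0 := by
  constructor <;> nlinarith [sq_nonneg b, sq_nonneg c]

set_option maxHeartbeats 1000000 in
lemma so3_psd (Q : Matrix (Fin 3) (Fin 3) ℝ) (h : Qᵀ * Q = 1) (hdet : Q.det = 1)
    (x : Fin 3 → ℝ) : (Q.trace - 1) * (x ⬝ᵥ x) ≤ 2 * (x ⬝ᵥ Q.mulVec x) := by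
  have h2 : Q * Qᵀ = 1 := mul_eq_one_comm.mp h
  have hent := Matrix.ext_iff.mpr h
  have hent2 := Matrix.ext_iff.mpr h2
  simp only [Matrix.mul_apply, Matrix.transpose_apply, Fin.sum_univ_three, Matrix.one_apply] at hent hent2

  have c00 := hent 0 0; norm_num [Fin.ext_iff] at c00
  have r00 := hent2 0 0; norm_num [Fin.ext_iff] at r00
  have c01 := hent 0 1; norm_num [Fin.ext_iff] at c01
  have r01 := hent2 0 1; norm_num [Fin.ext_iff] at r01
  have c02 := hent 0 2; norm_num [Fin.ext_iff] at c02
  have r02 := hent2 0 2; norm_num [Fin.ext_iff] at r02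
  have c10 := hent 1 0; norm_num [Fin.ext_iff] at c10
  have r10 := hent2 1 0; norm_num [Fin.ext_iff] at r10
  have c11 := hent 1 1; norm_num [Fin.ext_iff] at c11
  have r11 := hent2 1 1; norm_num [Fin.ext_iff] at r11
  have c12 := hent 1 2; norm_num [Fin.ext_iff] at c12
  have r12 := hent2 1 2; norm_num [Fin.ext_iff] at r12
  have c20 := hent 2 0; norm_num [Fin.ext_iff] at c20
  have r20 := hent2 2 0; norm_num [Fin.ext_iff] at r20
  have c21 := hent 2 1; norm_num [Fin.ext_iff] at c21
  have r21 := hent2 2 1; norm_num [Fin.ext_iff] at r21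
  have c22 := hent 2 2; norm_num [Fin.ext_iff] at c22
  have r22 := hent2 2 2; norm_num [Fin.ext_iff] at r22
  have htr : Q.trace = Q 0 0 + Q 1 1 + Q 2 2 := Matrix.trace_fin_three Q
  have hb0 : Q 0 0 ≤ 1 := diag_le_one c00
  have hb1 : Q 1 1 ≤ 1 := diag_le_one2 c11
  have hb2 : Q 2 2 ≤ 1 := diag_le_one3 c22
  have ht3 : Q.trace ≤ 3 := by rw [htr]; linarith
  rcases lt_or_eq_of_le ht3 with hlt | heq
  case inl =>
    have mc : Q * Q = Qᵀ + Q.trace • Q - Q.trace • (1 : Matrix (Fin 3) (Fin 3) ℝ) := by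
      have := ch_rel Q h hdet; rw [this]; abel
    have mcent := Matrix.ext_iff.mpr mc
    simp only [Matrix.mul_apply, Matrix.transpose_apply, Matrix.sub_apply, Matrix.add_apply,
      Matrix.smul_apply, Matrix.one_apply, Fin.sum_univ_three, smul_eq_mul, htr] at mcent

    have m00 := mcent 0 0; norm_num [Fin.ext_iff] at m00
    have m01 := mcent 0 1; norm_num [Fin.ext_iff] at m01
    have m02 := mcent 0 2; norm_num [Fin.ext_iff] at m02
    have m10 := mcent 1 0; norm_num [Fin.ext_iff] at m10
    have m11 := mcent 1 1; norm_num [Fin.ext_iff] at m11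
    have m12 := mcent 1 2; norm_num [Fin.ext_iff] at m12
    have m20 := mcent 2 0; norm_num [Fin.ext_iff] at m20
    have m21 := mcent 2 1; norm_num [Fin.ext_iff] at m21
    have m22 := mcent 2 2; norm_num [Fin.ext_iff] at m22
    set s : Fin 3 → ℝ := fun i => Q.mulVec x i + Qᵀ.mulVec x i - (Q.trace - 1) * x i with hs
    have key : (3 - Q.trace) * (2 * (x ⬝ᵥ Q.mulVec x) - (Q.trace - 1) * (x ⬝ᵥ x))
        = s 0 ^ 2 + s 1 ^ 2 + s 2 ^ 2 := by
      simp only [hs, Matrix.mulVec, dotProduct, Matrix.transpose_apply,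
        Fin.sum_univ_three, htr]
      linear_combination (-2 * x 0 * x 0) * m00 + (-2 * x 0 * x 1) * m01 + (-2 * x 0 * x 2) * m02 + (-2 * x 1 * x 0) * m10 + (-2 * x 1 * x 1) * m11 + (-2 * x 1 * x 2) * m12 + (-2 * x 2 * x 0) * m20 + (-2 * x 2 * x 1) * m21 + (-2 * x 2 * x 2) * m22 + (- x 0 * x 0) * c00 + (- x 0 * x 1) * c01 + (- x 0 * x 2) * c02 + (- x 1 * x 0) * c10 + (- x 1 * x 1) * c11 + (- x 1 * x 2) * c12 + (- x 2 * x 0) * c20 + (- x 2 * x 1) * c21 + (- x 2 * x 2) * c22 + (- x 0 * x 0) * r00 + (- x 0 * x 1) * r01 + (- x 0 * x 2) * r02 + (- x 1 * x 0) * r10 + (- x 1 * x 1) * r11 + (- x 1 * x 2) * r12 + (- x 2 * x 0) * r20 + (- x 2 * x 1) * r21 + (- x 2 * x 2) * r22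
    have hnn : 0 ≤ (3 - Q.trace) * (2 * (x ⬝ᵥ Q.mulVec x) - (Q.trace - 1) * (x ⬝ᵥ x)) := by
      rw [key]; positivity
    have hpos : (0:ℝ) < 3 - Q.trace := by linarith
    have hE := (mul_nonneg_iff_of_pos_left hpos).mp hnn
    linarith
  case inr =>
    have heq' : Q 0 0 + Q 1 1 + Q 2 2 = 3 := by rw [← htr]; exact heq
    have h00 : Q 0 0 = 1 := by linarith
    have h11 : Q 1 1 = 1 := by linarith
    have h22 : Q 2 2 = 1 := by linarith
    obtain ⟨z10, z20⟩ := off_zero c00 h00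
    obtain ⟨z01, z21⟩ := off_zero2 c11 h11
    obtain ⟨z02, z12⟩ := off_zero3 c22 h22
    rw [htr]
    simp only [Matrix.mulVec, dotProduct, Fin.sum_univ_three]
    rw [h00, h11, h22, z10, z20, z01, z21, z02, z12]
    ring_nf

    exact le_rfl

noncomputable def Rz (α : ℝ) : Matrix (Fin 3) (Fin 3) ℝ :=
  !![Real.cos α, -Real.sin α, 0; Real.sin α, Real.cos α, 0; 0, 0, 1]

lemma Rz_transpose (α : ℝ) :
    (Rz α)ᵀ = !![Real.cos α, Real.sin α, 0; -Real.sin α, Real.cos α, 0; 0, 0, 1] := by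
  ext i j; fin_cases i <;> fin_cases j <;> simp [Rz]

lemma Rz_orth (α : ℝ) : (Rz α)ᵀ * (Rz α) = 1 := by
  rw [Rz_transpose, Rz, Matrix.mul_fin_three, Matrix.one_fin_three]
  congr 1 <;> ring_nf <;> simp [Real.sin_sq_add_cos_sq]

lemma Rz_det (α : ℝ) : (Rz α).det = 1 := by
  simp [Rz, Matrix.det_fin_three]
  linear_combination (Real.sin_sq_add_cos_sq α)

lemma final_ineq (C S c x0 x1 x2 y0 y1 y2 : ℝ)
    (hpy : S^2 + C^2 = 1)
    (hyy : y0*y0 + y1*y1 + y2*y2 = x0*x0 + x1*x1 + x2*x2)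
    (hpsd : (1 + 2*c - 1) * (x0*x0+x1*x1+x2*x2) ≤ 2*(x0*(C*y0 - S*y1) + x1*(S*y0 + C*y1) + x2*y2))
    (hx : x0*x0+x1*x1+x2*x2 ≤ 1) (hc : c ≤ 1) :
    (x0 - (C*y0 - S*y1))^2 + (x1 - (S*y0 + C*y1))^2 ≤ 2*(1-c) := by
  have hrot : (C*y0 - S*y1)^2 + (S*y0 + C*y1)^2 = y0^2 + y1^2 := by
    linear_combination (y0^2 + y1^2) * hpy
  nlinarith [hrot, sq_nonneg (x2 - y2), mul_nonneg (by linarith : (0:ℝ) ≤ 1 - c) (by linarith : (0:ℝ) ≤ 1 - (x0*x0+x1*x1+x2*x2))]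

set_option maxHeartbeats 1000000 in
lemma matrix_bound (Q : Matrix (Fin 3) (Fin 3) ℝ) (h : Qᵀ * Q = 1) (hdet : Q.det = 1) :
    ∃ α : ℝ, ∀ x : Fin 3 → ℝ, x ⬝ᵥ x ≤ 1 →
      (x 0 - (Real.cos α * Q.mulVec x 0 - Real.sin α * Q.mulVec x 1))^2
        + (x 1 - (Real.sin α * Q.mulVec x 0 + Real.cos α * Q.mulVec x 1))^2
        ≤ 2 * (1 - Q 2 2) := by
  have h2 : Q * Qᵀ = 1 := mul_eq_one_comm.mp h
  have hent := Matrix.ext_iff.mpr h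
  have hent2 := Matrix.ext_iff.mpr h2
  simp only [Matrix.mul_apply, Matrix.transpose_apply, Fin.sum_univ_three, Matrix.one_apply] at hent hent2
  have c00 := hent 0 0; norm_num [Fin.ext_iff] at c00
  have c01 := hent 0 1; norm_num [Fin.ext_iff] at c01
  have c02 := hent 0 2; norm_num [Fin.ext_iff] at c02
  have c10 := hent 1 0; norm_num [Fin.ext_iff] at c10
  have c11 := hent 1 1; norm_num [Fin.ext_iff] at c11
  have c12 := hent 1 2; norm_num [Fin.ext_iff] at c12
  have c20 := hent 2 0; norm_num [Fin.ext_iff] at c20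
  have c21 := hent 2 1; norm_num [Fin.ext_iff] at c21
  have c22 := hent 2 2; norm_num [Fin.ext_iff] at c22
  have r00 := hent2 0 0; norm_num [Fin.ext_iff] at r00
  have r11 := hent2 1 1; norm_num [Fin.ext_iff] at r11
  have hadj := adj_eq_transpose Q h hdet
  have hcof : Q 0 0 * Q 1 1 - Q 0 1 * Q 1 0 = Q 2 2 := by
    have h22' := Matrix.ext_iff.mpr hadj 2 2
    rw [Matrix.adjugate_fin_three] at h22'
    simp [Matrix.transpose_apply] at h22'
    linarith [h22']
  have hident : (Q 0 0 + Q 1 1)^2 + (Q 0 1 - Q 1 0)^2 = (1 + Q 2 2)^2 := by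
    nlinarith [r00, r11, c22, hcof]
  have hc1 : Q 2 2 ≤ 1 := by nlinarith [sq_nonneg (Q 2 2 - 1), sq_nonneg (Q 0 2), sq_nonneg (Q 1 2), c22]
  have hcm1 : -1 ≤ Q 2 2 := by nlinarith [sq_nonneg (Q 2 2 + 1), sq_nonneg (Q 0 2), sq_nonneg (Q 1 2), c22]
  refine ⟨Complex.arg ⟨Q 0 0 + Q 1 1, Q 0 1 - Q 1 0⟩, ?_⟩
  set α := Complex.arg ⟨Q 0 0 + Q 1 1, Q 0 1 - Q 1 0⟩ with hα
  have habs : ‖(⟨Q 0 0 + Q 1 1, Q 0 1 - Q 1 0⟩ : ℂ)‖ = 1 + Q 2 2 := by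
    rw [Complex.norm_def, Complex.normSq_mk]
    rw [show (Q 0 0 + Q 1 1) * (Q 0 0 + Q 1 1) + (Q 0 1 - Q 1 0) * (Q 0 1 - Q 1 0) = (1 + Q 2 2)^2 by nlinarith [hident]]
    exact Real.sqrt_sq (by linarith)
  have hαtrace : Real.cos α * (Q 0 0 + Q 1 1) + Real.sin α * (Q 0 1 - Q 1 0) = 1 + Q 2 2 := by
    by_cases hz0 : (⟨Q 0 0 + Q 1 1, Q 0 1 - Q 1 0⟩ : ℂ) = 0
    · obtain ⟨hA0, hB0⟩ := Complex.ext_iff.mp hz0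
      simp only [Complex.zero_re, Complex.zero_im] at hA0 hB0
      rw [hz0] at habs
      simp only [norm_zero] at habs
      rw [hA0, hB0, ← habs]; ring
    · have hcos := Complex.cos_arg hz0
      have hsin := Complex.sin_arg (⟨Q 0 0 + Q 1 1, Q 0 1 - Q 1 0⟩ : ℂ)
      have hpos : 0 < 1 + Q 2 2 := habs ▸ norm_pos_iff.mpr hz0
      rw [hα, hcos, hsin, habs]
      dsimp only
      field_simp
      linear_combination hident
  have horth' : (Rz α * Q)ᵀ * (Rz α * Q) = 1 := by
    rw [Matrix.transpose_mul, Matrix.mul_assoc, ← Matrix.mul_assoc (Rz α)ᵀ, Rz_orth, Matrix.one_mul, h]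
  have hdet' : (Rz α * Q).det = 1 := by rw [Matrix.det_mul, Rz_det, hdet, one_mul]
  have htrace : (Rz α * Q).trace = 1 + 2 * Q 2 2 := by
    rw [Matrix.trace_fin_three]
    simp [Rz, Matrix.mul_apply, Fin.sum_univ_three]
    linear_combination hαtrace
  intro x hx
  have psd := so3_psd (Rz α * Q) horth' hdet' x
  rw [htrace] at psd
  have hmv : (Rz α * Q).mulVec x = (Rz α).mulVec (Q.mulVec x) := by
    rw [Matrix.mulVec_mulVec]
  set y := Q.mulVec x with hy
  have hyy : y ⬝ᵥ y = x ⬝ᵥ x := by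
    rw [hy]
    simp only [Matrix.mulVec, dotProduct, Fin.sum_univ_three]
    linear_combination (x 0 * x 0) * c00 + (x 0 * x 1) * c01 + (x 0 * x 2) * c02 + (x 1 * x 0) * c10 + (x 1 * x 1) * c11 + (x 1 * x 2) * c12 + (x 2 * x 0) * c20 + (x 2 * x 1) * c21 + (x 2 * x 2) * c22
  rw [hmv] at psd
  have hRzmv : (Rz α).mulVec y = fun i => ![Real.cos α * y 0 - Real.sin α * y 1, Real.sin α * y 0 + Real.cos α * y 1, y 2] i := by
    funext i
    fin_cases i <;> simp [Rz, Matrix.mulVec, dotProduct, Fin.sum_univ_three] <;> ring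
  rw [hRzmv] at psd
  simp only [dotProduct, Fin.sum_univ_three, Matrix.cons_val_zero, Matrix.cons_val_one,
    Matrix.head_cons, Matrix.cons_val_two, Matrix.tail_cons] at psd hx hyy
  exact final_ineq (Real.cos α) (Real.sin α) (Q 2 2) (x 0) (x 1) (x 2) (y 0) (y 1) (y 2)
    (Real.sin_sq_add_cos_sq α) hyy psd hx hc1


noncomputable def bas : Module.Basis (Fin 3) ℝ R3 := (EuclideanSpace.basisFun (Fin 3) ℝ).toBasis

noncomputable def matOf (R : R3 ≃ₗᵢ[ℝ] R3) : Matrix (Fin 3) (Fin 3) ℝ :=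
  LinearMap.toMatrix bas bas (R.toLinearEquiv : R3 →ₗ[ℝ] R3)

lemma matOf_apply (R : R3 ≃ₗᵢ[ℝ] R3) (i j : Fin 3) :
    matOf R i j = R (EuclideanSpace.single j 1) i := by
  rw [matOf, LinearMap.toMatrix_apply]
  simp [bas, OrthonormalBasis.coe_toBasis_repr_apply, EuclideanSpace.basisFun_repr,
    OrthonormalBasis.coe_toBasis, EuclideanSpace.basisFun_apply]

lemma matOf_mulVec (R : R3 ≃ₗᵢ[ℝ] R3) (x : R3) (i : Fin 3) :
    R x i = (matOf R).mulVec (fun j => x j) i := by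
  have hrepr : (fun j => x j) = ⇑(bas.repr x) := by
    funext j
    simp [bas, OrthonormalBasis.coe_toBasis_repr_apply, EuclideanSpace.basisFun_repr]
  rw [hrepr, matOf, LinearMap.toMatrix_mulVec_repr]
  simp [bas, OrthonormalBasis.coe_toBasis_repr_apply, EuclideanSpace.basisFun_repr]

lemma matOf_orth (R : R3 ≃ₗᵢ[ℝ] R3) : (matOf R)ᵀ * (matOf R) = 1 := by
  ext i j
  rw [Matrix.mul_apply]
  simp only [Matrix.transpose_apply, matOf_apply]
  have h1 : ∑ k : Fin 3, R (EuclideanSpace.single i 1) k * R (EuclideanSpace.single j 1) k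
      = (inner ℝ (R (EuclideanSpace.single i (1:ℝ))) (R (EuclideanSpace.single j (1:ℝ))) : ℝ) := by
    rw [PiLp.inner_apply]
    simp [RCLike.inner_apply]
    exact Finset.sum_congr rfl fun _ _ => mul_comm _ _
  rw [h1, LinearIsometryEquiv.inner_map_map]
  rw [EuclideanSpace.inner_single_left]
  simp [EuclideanSpace.single_apply, Matrix.one_apply, eq_comm]

lemma matOf_det (R : R3 ≃ₗᵢ[ℝ] R3) (hdet : LinearMap.det (R.toLinearEquiv : R3 →ₗ[ℝ] R3) = 1) :
    (matOf R).det = 1 := by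
  rw [matOf, LinearMap.det_toMatrix]; exact hdet

-- measurability helpers
def projL : R3 →ₗ[ℝ] R2 where
  toFun := proj
  map_add' _ _ := rfl
  map_smul' c x := by ext i; simp [proj]

def rot2L (α : ℝ) : R2 →ₗ[ℝ] R2 where
  toFun := rot2 α
  map_add' x y := by
    ext i
    fin_cases i <;> simp [rot2, WithLp.equiv_symm_apply, PiLp.toLp_apply] <;> ring
  map_smul' c x := by
    ext i
    fin_cases i <;> simp [rot2, WithLp.equiv_symm_apply, PiLp.toLp_apply] <;> ring

lemma measurable_proj' : Measurable proj :=
  (LinearMap.continuous_of_finiteDimensional projL).measurable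

lemma measurable_rot2 (α : ℝ) : Measurable (rot2 α) :=
  (LinearMap.continuous_of_finiteDimensional (rot2L α)).measurable

end CryoemAux


open CryoemAux Matrix in
theorem stmt3 (ρ : Measure R3) [IsProbabilityMeasure ρ] (hρ : ρ (Metric.closedBall 0 1)ᶜ = 0)
    (R : R3 ≃ₗᵢ[ℝ] R3) (hdet : LinearMap.det (R.toLinearEquiv : R3 →ₗ[ℝ] R3) = 1)
    (u v : R3) (hu : u = -(EuclideanSpace.single 2 (1:ℝ))) (hv : v = R u)
    (θ : ℝ) (hθ : θ = angle u v) :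
    W1R (ρ.map proj) ((ρ.map R).map proj) ≤ ENNReal.ofReal (2 * Real.sin (θ / 2)) ∧
      2 * Real.sin (θ / 2) ≤ θ := by
  have hθnn : 0 ≤ θ := hθ ▸ InnerProductGeometry.angle_nonneg u v
  have hθpi : θ ≤ π := hθ ▸ InnerProductGeometry.angle_le_pi u v
  have hsinn : 0 ≤ Real.sin (θ/2) :=
    Real.sin_nonneg_of_nonneg_of_le_pi (by linarith) (by linarith [Real.pi_nonneg])
  refine ⟨?_, by linarith [Real.sin_le (by linarith : (0:ℝ) ≤ θ/2)]⟩
  -- matrix of R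
  set Q := matOf R with hQdef
  have horthQ := matOf_orth R
  have hdetQ := matOf_det R hdet
  obtain ⟨α, hα⟩ := matrix_bound Q horthQ hdetQ
  -- cos θ = Q 2 2
  have hu1 : ‖u‖ = 1 := by rw [hu]; simp [EuclideanSpace.norm_single]
  have hv1 : ‖v‖ = 1 := by rw [hv, R.norm_map]; exact hu1
  have hinner : (inner ℝ u v : ℝ) = Q 2 2 := by
    rw [hu, hv, hu, map_neg, inner_neg_neg, EuclideanSpace.inner_single_left, hQdef,
      matOf_apply]
    simp
  have hcosθ : Real.cos θ = Q 2 2 := by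
    rw [hθ, InnerProductGeometry.cos_angle, hinner, hu1, hv1]; norm_num
  have hsq : (2 * Real.sin (θ/2))^2 = 2*(1 - Q 2 2) := by
    have hs := Real.sin_sq_eq_half_sub (θ/2)
    rw [show 2*(θ/2) = θ by ring] at hs
    linear_combination 4 * hs - 2 * hcosθ
  -- pointwise bound
  have hpt : ∀ x : R3, x ∈ Metric.closedBall (0:R3) 1 →
      edist (proj x) (rot2 α (proj (R x))) ≤ ENNReal.ofReal (2 * Real.sin (θ / 2)) := by
    intro x hx
    rw [edist_dist]
    apply ENNReal.ofReal_le_ofReal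
    have hxnorm : ‖x‖ ≤ 1 := by rwa [Metric.mem_closedBall, dist_zero_right] at hx
    have hxd : (fun j => x j) ⬝ᵥ (fun j => x j) ≤ 1 := by
      have h1 : ((fun j => x j) ⬝ᵥ (fun j => x j)) = (inner ℝ x x : ℝ) := by
        rw [PiLp.inner_apply]
        simp [RCLike.inner_apply, dotProduct]
        simp only [sq]
      rw [h1, real_inner_self_eq_norm_sq]
      nlinarith [hxnorm, norm_nonneg x]
    have hbd := hα (fun j => x j) hxd
    have hp0 : ∀ y : R3, proj y 0 = y 0 := fun _ => rfl
    have hp1 : ∀ y : R3, proj y 1 = y 1 := fun _ => rfl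
    have hr0 : rot2 α (proj (R x)) 0 = Real.cos α * proj (R x) 0 - Real.sin α * proj (R x) 1 := by
      simp [rot2, WithLp.equiv_symm_apply, PiLp.toLp_apply]
    have hr1 : rot2 α (proj (R x)) 1 = Real.sin α * proj (R x) 0 + Real.cos α * proj (R x) 1 := by
      simp [rot2, WithLp.equiv_symm_apply, PiLp.toLp_apply]
    have hd0 : proj x 0 - rot2 α (proj (R x)) 0
        = (x 0 - (Real.cos α * Q.mulVec (fun j => x j) 0 - Real.sin α * Q.mulVec (fun j => x j) 1)) := by
      rw [hr0]
      simp only [hp0, hp1]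
      rw [matOf_mulVec R x 0, matOf_mulVec R x 1, ← hQdef]
    have hd1 : proj x 1 - rot2 α (proj (R x)) 1
        = (x 1 - (Real.sin α * Q.mulVec (fun j => x j) 0 + Real.cos α * Q.mulVec (fun j => x j) 1)) := by
      rw [hr1]
      simp only [hp0, hp1]
      rw [matOf_mulVec R x 0, matOf_mulVec R x 1, ← hQdef]
    rw [EuclideanSpace.dist_eq, Fin.sum_univ_two]
    simp only [Real.dist_eq, sq_abs]
    rw [hd0, hd1]
    calc Real.sqrt (_ ^ 2 + _ ^ 2) ≤ Real.sqrt ((2 * Real.sin (θ/2))^2) := by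
          apply Real.sqrt_le_sqrt
          rw [hsq]
          exact hbd
    _ = 2 * Real.sin (θ/2) := Real.sqrt_sq (by linarith)
  -- measures
  have hRm : Measurable ⇑R := R.continuous.measurable
  set g : R3 → R2 × R2 := fun x => (proj x, rot2 α (proj (R x))) with hg_def
  have hg : Measurable g :=
    (measurable_proj').prodMk ((measurable_rot2 α).comp (measurable_proj'.comp hRm))
  have hcoupling : (ρ.map g) ∈ couplings (ρ.map proj) (((ρ.map ⇑R).map proj).map (rot2 α)) := by
    constructor
    · rw [Measure.map_map measurable_fst hg]
      rfl
    · rw [Measure.map_map measurable_snd hg, Measure.map_map measurable_proj' hRm,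
        Measure.map_map (measurable_rot2 α) (measurable_proj'.comp hRm)]
      rfl
  have hae : ∀ᵐ x ∂ρ, x ∈ Metric.closedBall (0:R3) 1 := by
    rw [MeasureTheory.ae_iff]
    convert hρ using 2
    rfl
  calc W1R (ρ.map proj) ((ρ.map ⇑R).map proj)
      ≤ W1 (ρ.map proj) (((ρ.map ⇑R).map proj).map (rot2 α)) := iInf_le _ α
  _ ≤ ∫⁻ p, edist p.1 p.2 ∂(ρ.map g) := iInf₂_le _ hcoupling
  _ = ∫⁻ x, edist (proj x) (rot2 α (proj (R x))) ∂ρ :=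
      lintegral_map (measurable_fst.edist measurable_snd) hg
  _ ≤ ∫⁻ _, ENNReal.ofReal (2 * Real.sin (θ / 2)) ∂ρ := lintegral_mono_ae (hae.mono hpt)
  _ = ENNReal.ofReal (2 * Real.sin (θ / 2)) := by simp

end
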